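/- arXiv:1904.05338 — 4 statements merged into one kernel-verified Lean document; each statement's English description precedes it below -/
import Mathlib

section
/- Let β⋆ ∈ ℝ^p with β⋆ ≠ 0 and let φ = φ(β⋆;‖·‖) be the relative diameter. Then every v ∈ ℝ^p satisfying (1/2)·‖v‖ + ‖β⋆‖ ≥ ‖β⋆ + v‖ also satisfies ‖v‖ ≤ 2φ·‖v‖₂. -/
open Metric Set

noncomputable section

/-- Euclidean space `ℝ^p`. -/
abbrev E (p : ℕ) := EuclideanSpace ℝ (Fin p)

/-- The dual norm of a norm `N` on `ℝ^p`: `‖θ‖⋆ = sup {⟨θ, β⟩ : N β ≤ 1}`. -/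
def dualOf {p : ℕ} (N : E p → ℝ) (θ : E p) : ℝ :=
  sSup ((fun β => (inner ℝ θ β : ℝ)) '' {β | N β ≤ 1})

/-- The dual norm unit ball `B⋆ = {z : ‖z‖⋆ ≤ 1}`. -/
def dualBall {p : ℕ} (N : E p → ℝ) : Set (E p) :=
  {z | dualOf N z ≤ 1}

/-- The subdifferential of `N` at `β`. -/
def subdiff {p : ℕ} (N : E p → ℝ) (β : E p) : Set (E p) :=
  {g | ∀ y : E p, N y ≥ N β + (inner ℝ g (y - β) : ℝ)}

/-- The relative diameter `φ(β; N)`: the Hausdorff distance (in the Euclidean metric)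
between the dual norm ball and the subdifferential of `N` at `β`. -/
def relDiam {p : ℕ} (N : E p → ℝ) (β : E p) : ℝ :=
  Metric.hausdorffDist (dualBall N) (subdiff N β)

section AuxT
variable {p : ℕ} {N : E p → ℝ}

theorem myN_zero (Nsmul : ∀ (a : ℝ) (x : E p), N (a • x) = |a| * N x) : N 0 = 0 := by
  have := Nsmul 0 0; simpa using this

theorem myN_nonneg (Ntriangle : ∀ x z : E p, N (x + z) ≤ N x + N z)
    (Nsmul : ∀ (a : ℝ) (x : E p), N (a • x) = |a| * N x) (x : E p) : 0 ≤ N x := by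
  have h := Ntriangle x (-x)
  have h2 : N (-x) = N x := by have := Nsmul (-1) x; simpa using this
  have h0 : N (x + -x) = 0 := by rw [add_neg_cancel]; exact myN_zero Nsmul
  rw [h0, h2] at h; linarith

theorem myN_upper (Ntriangle : ∀ x z : E p, N (x + z) ≤ N x + N z)
    (Nsmul : ∀ (a : ℝ) (x : E p), N (a • x) = |a| * N x) :
    ∃ C : ℝ, 0 < C ∧ ∀ x : E p, N x ≤ C * ‖x‖ := by
  classical
  have hsum : ∀ (s : Finset (Fin p)) (f : Fin p → E p),
      N (∑ i ∈ s, f i) ≤ ∑ i ∈ s, N (f i) := by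
    intro s f
    induction s using Finset.induction with
    | empty => simp [myN_zero Nsmul]
    | insert a s h ih =>
        rw [Finset.sum_insert h, Finset.sum_insert h]
        exact le_trans (Ntriangle _ _) (by linarith)
  refine ⟨(∑ i : Fin p, N (EuclideanSpace.single i (1:ℝ))) + 1, ?_, ?_⟩
  · have : 0 ≤ ∑ i : Fin p, N (EuclideanSpace.single i (1:ℝ)) :=
      Finset.sum_nonneg fun i _ => myN_nonneg Ntriangle Nsmul _
    linarith
  · intro x
    have hahh : ∀ i : Fin p, |x i| ≤ ‖x‖ := by
      intro i
      have h1 : (inner ℝ (EuclideanSpace.single i (1:ℝ)) x : ℝ) = x i := by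
        simp [EuclideanSpace.inner_single_left]
      have h2 := abs_real_inner_le_norm (EuclideanSpace.single i (1:ℝ)) x
      rw [h1, EuclideanSpace.norm_single] at h2
      simpa using h2
    have hx : x = ∑ i : Fin p, x i • EuclideanSpace.single i (1:ℝ) := by
      have := (EuclideanSpace.basisFun (Fin p) ℝ).sum_repr x
      simp only [EuclideanSpace.basisFun_repr, EuclideanSpace.basisFun_apply] at this
      exact this.symm
    calc N x = N (∑ i : Fin p, x i • EuclideanSpace.single i (1:ℝ)) := by rw [← hx]
      _ ≤ ∑ i : Fin p, N (x i • EuclideanSpace.single i (1:ℝ)) := hsum _ _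
      _ = ∑ i : Fin p, |x i| * N (EuclideanSpace.single i (1:ℝ)) := by
            simp [Nsmul]
      _ ≤ ∑ i : Fin p, ‖x‖ * N (EuclideanSpace.single i (1:ℝ)) := by
            refine Finset.sum_le_sum fun i _ => ?_
            exact mul_le_mul_of_nonneg_right (hahh i) (myN_nonneg Ntriangle Nsmul _)
      _ = (∑ i : Fin p, N (EuclideanSpace.single i (1:ℝ))) * ‖x‖ := by
            rw [← Finset.mul_sum]; ring
      _ ≤ ((∑ i : Fin p, N (EuclideanSpace.single i (1:ℝ))) + 1) * ‖x‖ := by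
            nlinarith [norm_nonneg x]

theorem myN_lower (Ntriangle : ∀ x z : E p, N (x + z) ≤ N x + N z)
    (Nsmul : ∀ (a : ℝ) (x : E p), N (a • x) = |a| * N x)
    (Ndefinite : ∀ x : E p, N x = 0 → x = 0)
    {w : E p} (hw : w ≠ 0) :
    ∃ c : ℝ, 0 < c ∧ ∀ x : E p, c * ‖x‖ ≤ N x := by
  obtain ⟨C, hC, hCle⟩ := myN_upper Ntriangle Nsmul
  have hcont : Continuous N := by
    rw [Metric.continuous_iff]
    intro x ε hε
    refine ⟨ε / C, by positivity, fun y hy => ?_⟩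
    have h1 : N y - N x ≤ N (y - x) := by
      have := Ntriangle (y - x) x; simpa using this
    have h2 : N x - N y ≤ N (y - x) := by
      have hh := Ntriangle (x - y) y
      have hxy : N (x - y) = N (y - x) := by
        rw [show x - y = (-1:ℝ) • (y - x) by module, Nsmul]; simp
      simp only [hxy, sub_add_cancel] at hh; linarith
    have h3 : N (y - x) ≤ C * ‖y - x‖ := hCle _
    have h4 : ‖y - x‖ < ε / C := by rwa [← dist_eq_norm]
    have h5 : C * ‖y - x‖ < ε := by
      calc C * ‖y - x‖ < C * (ε / C) := mul_lt_mul_of_pos_left h4 hC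
        _ = ε := by field_simp
    have : |N y - N x| < ε := by
      rw [abs_sub_lt_iff]; constructor <;> linarith
    simpa [Real.dist_eq] using this
  have hne : (sphere (0 : E p) 1).Nonempty := ⟨‖w‖⁻¹ • w, by
    simp [norm_smul, norm_ne_zero_iff.2 hw, abs_inv, inv_mul_cancel₀ (norm_ne_zero_iff.2 hw)]⟩
  obtain ⟨x₀, hx₀mem, hx₀min⟩ :=
    (isCompact_sphere (0 : E p) 1).exists_isMinOn hne hcont.continuousOn
  have hx₀norm : ‖x₀‖ = 1 := by simpa using mem_sphere_iff_norm.mp hx₀mem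
  have hx₀ne : x₀ ≠ 0 := by intro h; rw [h] at hx₀norm; simp at hx₀norm
  have hc : 0 < N x₀ := by
    rcases lt_or_eq_of_le (myN_nonneg Ntriangle Nsmul x₀) with h | h
    · exact h
    · exact absurd (Ndefinite x₀ h.symm) hx₀ne
  refine ⟨N x₀, hc, fun x => ?_⟩
  rcases eq_or_ne x 0 with rfl | hx
  · simp [myN_zero Nsmul]
  · have hxn : (0:ℝ) < ‖x‖ := norm_pos_iff.mpr hx
    have hmem : ‖x‖⁻¹ • x ∈ sphere (0 : E p) 1 := by
      simp [norm_smul, abs_inv, inv_mul_cancel₀ hxn.ne']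
    have hmin : N x₀ ≤ N (‖x‖⁻¹ • x) := hx₀min hmem
    have h2 : N (‖x‖⁻¹ • x) = ‖x‖⁻¹ * N x := by
      rw [Nsmul]; congr 1; rw [abs_inv, abs_of_pos hxn]
    rw [h2] at hmin
    calc N x₀ * ‖x‖ ≤ (‖x‖⁻¹ * N x) * ‖x‖ := by
          exact mul_le_mul_of_nonneg_right hmin hxn.le
      _ = N x := by field_simp

theorem exists_norming (Ntriangle : ∀ x z : E p, N (x + z) ≤ N x + N z)
    (Nsmul : ∀ (a : ℝ) (x : E p), N (a • x) = |a| * N x)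
    {v : E p} (hv : v ≠ 0) :
    ∃ g : E p, (∀ x : E p, (inner ℝ g x : ℝ) ≤ N x) ∧ (inner ℝ g v : ℝ) = N v := by
  have Nhom : ∀ c : ℝ, 0 < c → ∀ x : E p, N (c • x) = c * N x := fun c hc x => by
    rw [Nsmul, abs_of_pos hc]
  have hfle : ∀ x : (LinearPMap.mkSpanSingleton v (N v) hv : E p →ₗ.[ℝ] ℝ).domain,
      (LinearPMap.mkSpanSingleton v (N v) hv : E p →ₗ.[ℝ] ℝ) x ≤ N x := by
    rintro ⟨x, hx⟩
    obtain ⟨a, rfl⟩ := Submodule.mem_span_singleton.mp hx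
    have hval : (LinearPMap.mkSpanSingleton v (N v) hv : E p →ₗ.[ℝ] ℝ) ⟨a • v, hx⟩ = a * N v := by
      have := LinearPMap.mkSpanSingleton'_apply v (N v)
        (fun c hc => (smul_eq_zero.1 hc).elim (fun h => by rw [h]; simp)
          (fun h => absurd h hv)) a hx
      simpa using this
    rw [hval, Nsmul]
    have := myN_nonneg Ntriangle Nsmul v
    nlinarith [le_abs_self a]
  obtain ⟨f, hf1, hf2⟩ := exists_extension_of_le_sublinear
    (LinearPMap.mkSpanSingleton v (N v) hv) N Nhom Ntriangle hfle
  set f' : E p →L[ℝ] ℝ := LinearMap.toContinuousLinearMap f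
  set g : E p := (InnerProductSpace.toDual ℝ (E p)).symm f'
  have hg : ∀ x : E p, (inner ℝ g x : ℝ) = f x := fun x =>
    InnerProductSpace.toDual_symm_apply
  refine ⟨g, fun x => (hg x).symm ▸ hf2 x, ?_⟩
  rw [hg v]
  have := hf1 ⟨v, Submodule.mem_span_singleton_self v⟩
  rw [LinearPMap.mkSpanSingleton_apply] at this
  exact this

theorem mem_dualBall_iff (Ntriangle : ∀ x z : E p, N (x + z) ≤ N x + N z)
    (Nsmul : ∀ (a : ℝ) (x : E p), N (a • x) = |a| * N x)
    (Ndefinite : ∀ x : E p, N x = 0 → x = 0) {w : E p} (hw : w ≠ 0) (z : E p) :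
    z ∈ dualBall N ↔ ∀ x : E p, (inner ℝ z x : ℝ) ≤ N x := by
  obtain ⟨c, hc, hcle⟩ := myN_lower Ntriangle Nsmul Ndefinite hw
  constructor
  · intro hz x
    have hbdd : BddAbove ((fun β => (inner ℝ z β : ℝ)) '' {β | N β ≤ 1}) := by
      refine ⟨‖z‖ * c⁻¹, ?_⟩
      rintro a ⟨β, hβ, rfl⟩
      calc (inner ℝ z β : ℝ) ≤ ‖z‖ * ‖β‖ := real_inner_le_norm z β
        _ ≤ ‖z‖ * c⁻¹ := by
            refine mul_le_mul_of_nonneg_left ?_ (norm_nonneg z)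
            have h1 : c * ‖β‖ ≤ 1 := le_trans (hcle β) hβ
            rw [show (c:ℝ)⁻¹ = c⁻¹ * 1 by ring, le_inv_mul_iff₀ hc]
            linarith
    rcases eq_or_lt_of_le (myN_nonneg Ntriangle Nsmul x) with h | h
    · have hx0 : x = 0 := Ndefinite x h.symm
      simp only [hx0, inner_zero_right]
      exact myN_nonneg Ntriangle Nsmul 0
    · have hmem : (inner ℝ z ((N x)⁻¹ • x) : ℝ) ∈
          (fun β => (inner ℝ z β : ℝ)) '' {β | N β ≤ 1} := by
        refine ⟨(N x)⁻¹ • x, ?_, rfl⟩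
        simp only [mem_setOf_eq, Nsmul, abs_inv, abs_of_pos h]
        rw [inv_mul_cancel₀ h.ne']
      have h1 : (inner ℝ z ((N x)⁻¹ • x) : ℝ) ≤ dualOf N z := le_csSup hbdd hmem
      have h2 : (inner ℝ z ((N x)⁻¹ • x) : ℝ) = (N x)⁻¹ * (inner ℝ z x : ℝ) := by
        exact real_inner_smul_right z x (N x)⁻¹
      have h3 : (N x)⁻¹ * (inner ℝ z x : ℝ) ≤ 1 := by
        rw [← h2]; exact h1.trans hz
      calc (inner ℝ z x : ℝ) = N x * ((N x)⁻¹ * (inner ℝ z x : ℝ)) := by field_simp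
        _ ≤ N x * 1 := mul_le_mul_of_nonneg_left h3 h.le
        _ = N x := mul_one _
  · intro hz
    show sSup ((fun β => (inner ℝ z β : ℝ)) '' {β | N β ≤ 1}) ≤ 1
    refine Real.sSup_le ?_ zero_le_one
    rintro a ⟨β, hβ, rfl⟩
    exact (hz β).trans hβ

theorem mem_subdiff_of (Ntriangle : ∀ x z : E p, N (x + z) ≤ N x + N z)
    {β g : E p} (hg1 : ∀ x : E p, (inner ℝ g x : ℝ) ≤ N x)
    (hg2 : (inner ℝ g β : ℝ) = N β) : g ∈ subdiff N β := by
  intro y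
  have h1 : (inner ℝ g (y - β) : ℝ) = (inner ℝ g y : ℝ) - (inner ℝ g β : ℝ) := inner_sub_right g y β
  have h2 := hg1 y
  rw [ge_iff_le, h1, hg2]
  linarith

theorem subdiff_le (Ntriangle : ∀ x z : E p, N (x + z) ≤ N x + N z)
    (Nsmul : ∀ (a : ℝ) (x : E p), N (a • x) = |a| * N x)
    {β g : E p} (hg : g ∈ subdiff N β) (x : E p) : (inner ℝ g x : ℝ) ≤ N x := by
  have h := hg (β + x)
  have h1 : (inner ℝ g (β + x - β) : ℝ) = (inner ℝ g x : ℝ) := by congr 1; abel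
  rw [h1] at h
  have h2 := Ntriangle β x
  linarith

end AuxT

/-- every `v` in the error set `Ξ(β⋆)` satisfies `‖v‖ ≤ 2φ‖v‖₂` where
`φ = φ(β⋆; ‖·‖)` is the relative diameter. -/
theorem errSet_subset_cone (p : ℕ) (N : E p → ℝ)
    (Ntriangle : ∀ x z : E p, N (x + z) ≤ N x + N z)
    (Nsmul : ∀ (a : ℝ) (x : E p), N (a • x) = |a| * N x)
    (Ndefinite : ∀ x : E p, N x = 0 → x = 0)
    (βstar : E p) (hβstar : βstar ≠ 0) :
    ∀ v : E p, (1 / 2 : ℝ) * N v + N βstar ≥ N (βstar + v) →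
      N v ≤ 2 * relDiam N βstar * ‖v‖ := by
  intro v hv
  obtain ⟨C, hC, hCle⟩ := myN_upper Ntriangle Nsmul
  -- the dual ball is bounded and nonempty
  have hdb_char := fun z => mem_dualBall_iff Ntriangle Nsmul Ndefinite hβstar z
  have hdb_sub : dualBall N ⊆ closedBall (0 : E p) C := by
    intro z hz
    have hle : (inner ℝ z z : ℝ) ≤ N z := (hdb_char z).mp hz z
    have h1 : ‖z‖ ^ 2 ≤ C * ‖z‖ := by
      have := hCle z
      have h2 : (inner ℝ z z : ℝ) = ‖z‖ ^ 2 := real_inner_self_eq_norm_sq z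
      linarith
    have : ‖z‖ ≤ C := by nlinarith [norm_nonneg z]
    simpa [mem_closedBall, dist_eq_norm] using this
  have hdb_bdd : Bornology.IsBounded (dualBall N) :=
    (Metric.isBounded_closedBall).subset hdb_sub
  have hdb_ne : (dualBall N).Nonempty :=
    ⟨0, (hdb_char 0).mpr fun x => by
      rw [inner_zero_left]; exact myN_nonneg Ntriangle Nsmul x⟩
  -- the subdifferential is nonempty and bounded
  obtain ⟨g₀, hg₀1, hg₀2⟩ := exists_norming Ntriangle Nsmul hβstar
  have hsd_ne : (subdiff N βstar).Nonempty := ⟨g₀, mem_subdiff_of Ntriangle hg₀1 hg₀2⟩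
  have hsd_sub : subdiff N βstar ⊆ dualBall N := fun g hg =>
    (hdb_char g).mpr (subdiff_le Ntriangle Nsmul hg)
  have hsd_bdd : Bornology.IsBounded (subdiff N βstar) := hdb_bdd.subset hsd_sub
  have hedist : EMetric.hausdorffEdist (dualBall N) (subdiff N βstar) ≠ ⊤ :=
    Metric.hausdorffEdist_ne_top_of_nonempty_of_bounded hdb_ne hsd_ne hdb_bdd hsd_bdd
  -- trivial case v = 0
  rcases eq_or_ne v 0 with rfl | hvne
  · simp [myN_zero Nsmul]
  -- norming functional for v
  obtain ⟨z, hz1, hz2⟩ := exists_norming Ntriangle Nsmul hvne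
  have hzmem : z ∈ dualBall N := (hdb_char z).mpr hz1
  have hinf : infDist z (subdiff N βstar) ≤ relDiam N βstar :=
    Metric.infDist_le_hausdorffDist_of_mem hzmem hedist
  have hvpos : (0:ℝ) < ‖v‖ := norm_pos_iff.mpr hvne
  -- key estimate for every ε > 0
  have key : ∀ ε : ℝ, 0 < ε → N v ≤ 2 * relDiam N βstar * ‖v‖ + ε := by
    intro ε hε
    have hlt : infDist z (subdiff N βstar) < relDiam N βstar + ε / (2 * ‖v‖) :=
      lt_of_le_of_lt hinf (lt_add_of_pos_right _ (by positivity))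
    obtain ⟨g, hgmem, hgdist⟩ := (Metric.infDist_lt_iff hsd_ne).mp hlt
    have hgv : (inner ℝ g v : ℝ) ≤ (1/2 : ℝ) * N v := by
      have h := hgmem (βstar + v)
      have h1 : (inner ℝ g (βstar + v - βstar) : ℝ) = (inner ℝ g v : ℝ) := by congr 1; abel
      rw [h1] at h
      linarith
    have hsplit : (inner ℝ z v : ℝ) = (inner ℝ g v : ℝ) + (inner ℝ (z - g) v : ℝ) := by
      rw [inner_sub_left]; ring
    have hcs : (inner ℝ (z - g) v : ℝ) ≤ ‖z - g‖ * ‖v‖ := real_inner_le_norm _ _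
    have hdist : ‖z - g‖ < relDiam N βstar + ε / (2 * ‖v‖) := by
      rwa [dist_eq_norm] at hgdist
    have h5 : (inner ℝ (z - g) v : ℝ) ≤ (relDiam N βstar + ε / (2 * ‖v‖)) * ‖v‖ :=
      hcs.trans (mul_le_mul_of_nonneg_right hdist.le (norm_nonneg v))
    have h6 : (relDiam N βstar + ε / (2 * ‖v‖)) * ‖v‖
        = relDiam N βstar * ‖v‖ + ε / 2 := by field_simp
    have : N v ≤ (1/2 : ℝ) * N v + relDiam N βstar * ‖v‖ + ε / 2 := by
      rw [← hz2, hsplit]; rw [h6] at h5; linarith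
    linarith
  linarith [le_of_forall_pos_le_add key]

end
end

section
/- Let S ⊆ ℝ^p be a closed scale-invariant set whose linear span is ℝ^p, let Γ ∈ ℝ^{p×p}, and let δ > 0. Suppose |vᵀΓv| ≤ δ·‖v‖₂² for every v of the form v = s₁ + s₂ with s₁, s₂ ∈ S. Then |vᵀΓv| ≤ 3δ·‖v‖_S² for every v ∈ ℝ^p. -/
open Metric Set Matrix
open scoped Pointwise

noncomputable section

/-- A set is scale-invariant if it is closed under scaling by any real number. -/
def ScaleInvariant {p : ℕ} (S : Set (E p)) : Prop :=
  ∀ (a : ℝ), ∀ β ∈ S, a • β ∈ S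

/-- The structure norm `‖·‖_S`: the gauge of the convex hull of the unit-norm
elements of `S`. -/
def structNorm {p : ℕ} (S : Set (E p)) (β : E p) : ℝ :=
  gauge (convexHull ℝ {β ∈ S | ‖β‖ = 1}) β

/-- The quadratic form `vᵀ Γ v`. -/
def quadForm {p : ℕ} (Γ : Matrix (Fin p) (Fin p) ℝ) (v : E p) : ℝ :=
  dotProduct (fun i => v i) (Γ.mulVec fun i => v i)

set_option maxHeartbeats 1000000 in
/-- if `|vᵀΓv| ≤ δ‖v‖₂²` for every `v = s₁ + s₂` with `s₁, s₂ ∈ S`, then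
`|vᵀΓv| ≤ 3δ‖v‖_S²` for every `v`. -/
theorem quad_upper (p : ℕ) (S : Set (E p)) (hclosed : IsClosed S)
    (hscale : ScaleInvariant S) (hspan : Submodule.span ℝ S = ⊤)
    (Γ : Matrix (Fin p) (Fin p) ℝ) (δ : ℝ) (hδ : 0 < δ)
    (hquad : ∀ s₁ ∈ S, ∀ s₂ ∈ S, |quadForm Γ (s₁ + s₂)| ≤ δ * ‖s₁ + s₂‖ ^ 2) :
    ∀ v : E p, |quadForm Γ v| ≤ 3 * δ * (structNorm S v) ^ 2 := by
  classical
  intro v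
  set U : Set (E p) := {β ∈ S | ‖β‖ = 1} with hU
  set K : Set (E p) := convexHull ℝ U with hK
  by_cases hv0 : v = 0
  · subst hv0
    have h1 : quadForm Γ (0 : E p) = 0 := by
      have h0 : (fun i => (0 : E p) i) = (0 : Fin p → ℝ) := rfl
      simp [quadForm, h0]
    have h2 : structNorm S (0 : E p) = 0 := gauge_zero
    rw [h1, h2]
    simp
  -- S is nonempty
  have hSne : S.Nonempty := by
    by_contra h
    rw [Set.not_nonempty_iff_eq_empty] at h
    rw [h, Submodule.span_empty] at hspan
    have hvmem : v ∈ (⊥ : Submodule ℝ (E p)) := by rw [hspan]; trivial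
    exact hv0 ((Submodule.mem_bot ℝ).mp hvmem)
  have hzero : (0 : E p) ∈ S := by
    obtain ⟨s₀, hs₀⟩ := hSne
    simpa using hscale 0 s₀ hs₀
  -- unit elements
  have hunit : ∀ x ∈ S, x ≠ 0 → (‖x‖⁻¹ • x) ∈ U := by
    intro x hx hx0
    refine ⟨hscale _ x hx, ?_⟩
    rw [norm_smul, Real.norm_eq_abs, abs_inv, abs_norm]
    exact inv_mul_cancel₀ (norm_ne_zero_iff.2 hx0)
  have hUspan : Submodule.span ℝ U = ⊤ := by
    rw [eq_top_iff, ← hspan]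
    refine Submodule.span_le.mpr fun x hx => ?_
    by_cases hx0 : x = 0
    · simp [hx0]
    · have h1 : (‖x‖⁻¹ • x) ∈ U := hunit x hx hx0
      have h2 : x = ‖x‖ • (‖x‖⁻¹ • x) := by
        rw [smul_smul, mul_inv_cancel₀ (norm_ne_zero_iff.2 hx0), one_smul]
      rw [h2]
      exact Submodule.smul_mem _ _ (Submodule.subset_span h1)
  -- the absorbing set is nonempty
  have hA : ∃ r : ℝ, 0 < r ∧ v ∈ r • K := by
    have hv : v ∈ Submodule.span ℝ U := by rw [hUspan]; trivial
    obtain ⟨c, hsupp, hsum⟩ := Submodule.mem_span_set.mp hv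
    have hsum' : ∑ x ∈ c.support, c x • x = v := hsum
    set r : ℝ := ∑ x ∈ c.support, |c x| with hr
    have hrpos : 0 < r := by
      rcases c.support.eq_empty_or_nonempty with he | ⟨x, hx⟩
      · exfalso; apply hv0; rw [← hsum']; simp [he]
      · refine Finset.sum_pos' (fun i _ => abs_nonneg _) ⟨x, hx, ?_⟩
        exact abs_pos.2 (Finsupp.mem_support_iff.mp hx)
    refine ⟨r, hrpos, ?_⟩
    have hmem : c.support.centerMass (fun x => |c x|) (fun x => (c x / |c x|) • x)
        ∈ convexHull ℝ U := by
      refine Finset.centerMass_mem_convexHull _ (fun i _ => abs_nonneg _) hrpos ?_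
      intro x hx
      have hcx : c x ≠ 0 := Finsupp.mem_support_iff.mp hx
      have hxU : x ∈ U := hsupp hx
      refine ⟨hscale _ x hxU.1, ?_⟩
      rw [norm_smul, Real.norm_eq_abs, abs_div, abs_abs,
        div_self (abs_ne_zero.2 hcx), one_mul, hxU.2]
    have hcm : c.support.centerMass (fun x => |c x|) (fun x => (c x / |c x|) • x)
        = r⁻¹ • v := by
      rw [Finset.centerMass, ← hr, ← hsum']
      congr 1
      refine Finset.sum_congr rfl fun x hx => ?_
      have hcx : c x ≠ 0 := Finsupp.mem_support_iff.mp hx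
      rw [smul_smul]
      congr 1
      field_simp
    rw [hcm] at hmem
    exact ⟨r⁻¹ • v, hmem, by show r • r⁻¹ • v = v; rw [smul_smul, mul_inv_cancel₀ (ne_of_gt hrpos), one_smul]⟩
  -- bilinear form setup
  set L : E p →ₗ[ℝ] (Fin p → ℝ) := (WithLp.linearEquiv 2 ℝ (Fin p → ℝ)).toLinearMap with hL
  set G := Matrix.toBilin' Γ with hG
  have hq : ∀ x : E p, quadForm Γ x = G (L x) (L x) := fun x => by
    rw [hG, Matrix.toBilin'_apply']; rfl
  -- pairwise bound
  have hpair : ∀ x ∈ U, ∀ y ∈ U, |G (L x) (L y) + G (L y) (L x)| ≤ 6 * δ := by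
    intro x hx y hy
    have h1 : |quadForm Γ (x + y)| ≤ δ * ‖x + y‖ ^ 2 := hquad x hx.1 y hy.1
    have hxx : |quadForm Γ x| ≤ δ := by
      have := hquad x hx.1 0 hzero
      simpa [hx.2] using this
    have hyy : |quadForm Γ y| ≤ δ := by
      have := hquad y hy.1 0 hzero
      simpa [hy.2] using this
    have hnorm : ‖x + y‖ ≤ 2 := by
      calc ‖x + y‖ ≤ ‖x‖ + ‖y‖ := norm_add_le _ _
        _ = 2 := by rw [hx.2, hy.2]; norm_num
    have h1' : |quadForm Γ (x + y)| ≤ 4 * δ := by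
      refine h1.trans ?_
      have : ‖x + y‖ ^ 2 ≤ 4 := by nlinarith [norm_nonneg (x + y)]
      nlinarith
    have hexp : quadForm Γ (x + y)
        = quadForm Γ x + quadForm Γ y + (G (L x) (L y) + G (L y) (L x)) := by
      simp only [hq, map_add, LinearMap.add_apply]
      ring
    have : G (L x) (L y) + G (L y) (L x)
        = quadForm Γ (x + y) - quadForm Γ x - quadForm Γ y := by rw [hexp]; ring
    rw [this]
    calc |quadForm Γ (x + y) - quadForm Γ x - quadForm Γ y|
        ≤ |quadForm Γ (x + y)| + |quadForm Γ x| + |quadForm Γ y| := by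
          exact (abs_sub _ _).trans (by gcongr; exact abs_sub _ _)
      _ ≤ 4 * δ + δ + δ := by gcongr
      _ = 6 * δ := by ring
  -- main bound for each r with v ∈ r • K
  have hmain : ∀ r : ℝ, 0 < r → v ∈ r • K → |quadForm Γ v| ≤ 3 * δ * r ^ 2 := by
    intro r hr hvr
    obtain ⟨u, huK, huv⟩ := hvr
    rw [hK, convexHull_eq] at huK
    obtain ⟨ι, t, w, z, hw0, hw1, hzU, hcm⟩ := huK
    set c : ι → ℝ := fun i => r * w i with hc
    have hc0 : ∀ i ∈ t, 0 ≤ c i := fun i hi => mul_nonneg hr.le (hw0 i hi)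
    have hcsum : ∑ i ∈ t, c i = r := by
      rw [hc]; rw [← Finset.mul_sum, hw1, mul_one]
    have hLv : L v = ∑ i ∈ t, c i • L (z i) := by
      rw [← huv]
      have hu : u = ∑ i ∈ t, w i • z i := by
        rw [← hcm, Finset.centerMass, hw1]
        simp
      rw [hu]
      show L (r • ∑ i ∈ t, w i • z i) = _
      rw [_root_.map_smul, _root_.map_sum, Finset.smul_sum]
      refine Finset.sum_congr rfl fun i hi => ?_
      rw [_root_.map_smul, smul_smul]
    have hGv : quadForm Γ v
        = ∑ i ∈ t, ∑ j ∈ t, c i * (c j * G (L (z i)) (L (z j))) := by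
      rw [hq, hLv]
      simp only [_root_.map_sum, _root_.map_smul, LinearMap.sum_apply,
        LinearMap.smul_apply, smul_eq_mul]
      simp only [Finset.mul_sum]
      rw [Finset.sum_comm]
      exact Finset.sum_congr rfl fun a _ => Finset.sum_congr rfl fun b _ => by ring
    have hswap : ∑ i ∈ t, ∑ j ∈ t, c i * (c j * G (L (z j)) (L (z i)))
        = ∑ i ∈ t, ∑ j ∈ t, c i * (c j * G (L (z i)) (L (z j))) := by
      rw [Finset.sum_comm]
      exact Finset.sum_congr rfl fun a _ => Finset.sum_congr rfl fun b _ => by ring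
    have h2q : 2 * quadForm Γ v
        = ∑ i ∈ t, ∑ j ∈ t, c i * (c j * (G (L (z i)) (L (z j)) + G (L (z j)) (L (z i)))) := by
      have : ∑ i ∈ t, ∑ j ∈ t, c i * (c j * (G (L (z i)) (L (z j)) + G (L (z j)) (L (z i))))
          = (∑ i ∈ t, ∑ j ∈ t, c i * (c j * G (L (z i)) (L (z j))))
            + ∑ i ∈ t, ∑ j ∈ t, c i * (c j * G (L (z j)) (L (z i))) := by
        rw [← Finset.sum_add_distrib]
        refine Finset.sum_congr rfl fun i _ => ?_
        rw [← Finset.sum_add_distrib]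
        exact Finset.sum_congr rfl fun j _ => by ring
      rw [this, hswap, ← hGv]
      ring
    have habs : |2 * quadForm Γ v| ≤ 6 * δ * r ^ 2 := by
      rw [h2q]
      calc |∑ i ∈ t, ∑ j ∈ t, c i * (c j * (G (L (z i)) (L (z j)) + G (L (z j)) (L (z i))))|
          ≤ ∑ i ∈ t, |∑ j ∈ t, c i * (c j * (G (L (z i)) (L (z j)) + G (L (z j)) (L (z i))))| :=
            Finset.abs_sum_le_sum_abs _ _
        _ ≤ ∑ i ∈ t, ∑ j ∈ t, |c i * (c j * (G (L (z i)) (L (z j)) + G (L (z j)) (L (z i))))| := by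
            gcongr with i hi
            exact Finset.abs_sum_le_sum_abs _ _
        _ ≤ ∑ i ∈ t, ∑ j ∈ t, c i * (c j * (6 * δ)) := by
            refine Finset.sum_le_sum fun i hi => Finset.sum_le_sum fun j hj => ?_
            have e1 : |c i * (c j * (G (L (z i)) (L (z j)) + G (L (z j)) (L (z i))))|
                = |c i| * |c j * (G (L (z i)) (L (z j)) + G (L (z j)) (L (z i)))| := abs_mul _ _
            have e2 : |c j * (G (L (z i)) (L (z j)) + G (L (z j)) (L (z i)))|
                = |c j| * |G (L (z i)) (L (z j)) + G (L (z j)) (L (z i))| := abs_mul _ _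
            rw [e1, e2, abs_of_nonneg (hc0 i hi), abs_of_nonneg (hc0 j hj)]
            exact mul_le_mul_of_nonneg_left
              (mul_le_mul_of_nonneg_left (hpair _ (hzU i hi) _ (hzU j hj)) (hc0 j hj))
              (hc0 i hi)
        _ = 6 * δ * r ^ 2 := by
            have hinner : ∀ i ∈ t, ∑ j ∈ t, c i * (c j * (6 * δ)) = c i * (r * (6 * δ)) := by
              intro i hi
              rw [← Finset.mul_sum, ← Finset.sum_mul, hcsum]
            rw [Finset.sum_congr rfl hinner, ← Finset.sum_mul, hcsum]
            ring
    rw [abs_mul, abs_two] at habs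
    linarith
  -- pass to the gauge
  have hlt : ∀ ρ : ℝ, structNorm S v < ρ → |quadForm Γ v| ≤ 3 * δ * ρ ^ 2 := by
    intro ρ hρ
    have hρ' : sInf {r : ℝ | 0 < r ∧ v ∈ r • K} < ρ := hρ
    obtain ⟨rA, hrA⟩ := hA
    obtain ⟨b, ⟨hb0, hbK⟩, hbρ⟩ := exists_lt_of_csInf_lt ⟨rA, hrA⟩ hρ'
    refine (hmain b hb0 hbK).trans ?_
    have : b ^ 2 ≤ ρ ^ 2 := by nlinarith
    nlinarith
  have hg0 : 0 ≤ structNorm S v := gauge_nonneg _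
  have htend : Filter.Tendsto (fun ρ : ℝ => 3 * δ * ρ ^ 2)
      (nhdsWithin (structNorm S v) (Set.Ioi (structNorm S v)))
      (nhds (3 * δ * (structNorm S v) ^ 2)) := by
    exact ((continuous_const.mul (continuous_pow 2)).tendsto _).mono_left nhdsWithin_le_nhds
  refine ge_of_tendsto htend ?_
  filter_upwards [self_mem_nhdsWithin] with ρ hρ
  exact hlt ρ hρ

end
end

section
/- Let β ∈ ℝ^p with β ≠ 0 and let t = |{i ∈ {1,…,p} : |βᵢ| = ‖β‖_∞}| ≥ 1. Then the relative diameter of β with respect to the ℓ∞ norm satisfies φ(β;‖·‖_∞)² = 1 + 1/max{t − 1, 1/3}. -/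
open Metric Set

noncomputable section

/-- The ℓ∞ norm on `ℝ^p`. -/
def linf {p : ℕ} (β : E p) : ℝ := ⨆ i, |β i|

def σv {p : ℕ} (β : E p) : Fin p → ℝ := fun i => if 0 ≤ β i then 1 else -1
lemma abs_σv {p : ℕ} (β : E p) (i : Fin p) : |σv β i| = 1 := by
  unfold σv; split <;> simp
lemma σv_mul {p : ℕ} (β : E p) (i : Fin p) : σv β i * β i = |β i| := by
  unfold σv; rcases le_or_gt 0 (β i) with h | h
  · rw [if_pos h, one_mul, abs_of_nonneg h]
  · rw [if_neg (not_le.2 h), abs_of_neg h]; ring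
lemma σv_sq {p : ℕ} (β : E p) (i : Fin p) : σv β i ^ 2 = 1 := by
  unfold σv; split <;> norm_num
lemma abs_le_linf {p : ℕ} (β : E p) (i : Fin p) : |β i| ≤ linf β := by
  unfold linf
  exact le_ciSup (Set.Finite.bddAbove (Set.finite_range (fun i => |β i|))) i
lemma linf_le {p : ℕ} [Nonempty (Fin p)] (β : E p) {c : ℝ} (h : ∀ i, |β i| ≤ c) :
    linf β ≤ c := ciSup_le h
lemma linf_nonneg {p : ℕ} [Nonempty (Fin p)] (β : E p) : 0 ≤ linf β := by
  obtain ⟨i⟩ : Nonempty (Fin p) := inferInstance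
  exact le_trans (abs_nonneg (β i)) (abs_le_linf β i)
lemma inner_eq {p : ℕ} (x y : E p) : (inner ℝ x y : ℝ) = ∑ i, x i * y i := by
  simp [PiLp.inner_apply, RCLike.inner_apply, conj_trivial, mul_comm]
lemma norm_sq_eq {p : ℕ} (x : E p) : ‖x‖ ^ 2 = ∑ i, (x i) ^ 2 := by
  rw [EuclideanSpace.norm_eq, Real.sq_sqrt]
  · simp [sq_abs]
  · positivity
lemma norm_le_l1 {p : ℕ} (x : E p) : ‖x‖ ≤ ∑ i, |x i| := by
  have h1 : ‖x‖ ^ 2 ≤ (∑ i, |x i|) ^ 2 := by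
    rw [norm_sq_eq]
    calc ∑ i, (x i) ^ 2 = ∑ i, |x i| ^ 2 := by simp [sq_abs]
    _ ≤ (∑ i, |x i|) ^ 2 := Finset.sum_sq_le_sq_sum_of_nonneg (fun i _ => abs_nonneg _)
  have h2 : (0:ℝ) ≤ ∑ i, |x i| := Finset.sum_nonneg fun i _ => abs_nonneg _
  nlinarith [norm_nonneg x]

-- dual of linf is the l1 norm
lemma dualOf_linf {p : ℕ} [Nonempty (Fin p)] (z : E p) :
    dualOf linf z = ∑ i, |z i| := by
  apply IsGreatest.csSup_eq
  constructor
  · refine ⟨WithLp.toLp 2 (σv z : Fin p → ℝ), ?_, ?_⟩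
    · refine linf_le _ fun i => ?_
      show |σv z i| ≤ 1
      rw [abs_σv]
    · show (inner ℝ z (WithLp.toLp 2 (σv z : Fin p → ℝ)) : ℝ) = _
      rw [inner_eq]
      refine Finset.sum_congr rfl fun i _ => ?_
      show z i * σv z i = |z i|
      rw [mul_comm]; exact σv_mul z i
  · rintro v ⟨y, hy, rfl⟩
    show (inner ℝ z y : ℝ) ≤ _
    rw [inner_eq]
    refine Finset.sum_le_sum fun i _ => ?_
    have h1 : |y i| ≤ 1 := le_trans (abs_le_linf y i) hy
    calc z i * y i ≤ |z i * y i| := le_abs_self _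
    _ = |z i| * |y i| := abs_mul _ _
    _ ≤ |z i| * 1 := by gcongr
    _ = |z i| := mul_one _

lemma mem_dualBall_linf {p : ℕ} [Nonempty (Fin p)] (z : E p) :
    z ∈ dualBall (linf (p := p)) ↔ ∑ i, |z i| ≤ 1 := by
  simp [dualBall, dualOf_linf]

-- sufficient condition for subdiff membership
lemma mem_subdiff_linf {p : ℕ} [Nonempty (Fin p)] (β g : E p)
    (h1 : ∑ i, |g i| ≤ 1) (h2 : (inner ℝ g β : ℝ) = linf β) :
    g ∈ subdiff linf β := by
  intro y
  have key : (inner ℝ g y : ℝ) ≤ linf y := by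
    rw [inner_eq]
    calc ∑ i, g i * y i ≤ ∑ i, |g i| * linf y := by
          refine Finset.sum_le_sum fun i _ => ?_
          calc g i * y i ≤ |g i * y i| := le_abs_self _
          _ = |g i| * |y i| := abs_mul _ _
          _ ≤ |g i| * linf y := mul_le_mul_of_nonneg_left (abs_le_linf y i) (abs_nonneg _)
    _ = (∑ i, |g i|) * linf y := by rw [Finset.sum_mul]
    _ ≤ 1 * linf y := mul_le_mul_of_nonneg_right h1 (linf_nonneg y)
    _ = linf y := one_mul _
  have : (inner ℝ g (y - β) : ℝ) = inner ℝ g y - inner ℝ g β := inner_sub_right g y β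
  rw [ge_iff_le, this, h2]
  linarith

-- necessary conditions
lemma subdiff_linf_sub {p : ℕ} [Nonempty (Fin p)] (β g : E p)
    (hg : g ∈ subdiff linf β) :
    ∑ i, |g i| ≤ 1 ∧ (inner ℝ g β : ℝ) = linf β := by
  set sg : E p := WithLp.toLp 2 (σv g : Fin p → ℝ) with hsg
  have h0 := hg 0
  have h2 := hg ((2:ℝ) • β)
  have hs := hg sg
  have hlinf0 : linf (0 : E p) = 0 := by
    refine le_antisymm (linf_le _ fun i => by simp [show (0:E p) i = 0 from rfl]) ?_
    obtain ⟨i⟩ : Nonempty (Fin p) := inferInstance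
    exact le_trans (abs_nonneg ((0:E p) i)) (abs_le_linf 0 i)
  have habs2 : ∀ i, |((2:ℝ) • β) i| = 2 * |β i| := by
    intro i
    rw [PiLp.smul_apply, smul_eq_mul, abs_mul, abs_two]
  have hlinf2 : linf ((2:ℝ) • β) = 2 * linf β := by
    refine le_antisymm (linf_le _ fun i => ?_) ?_
    · rw [habs2]
      have := abs_le_linf β i
      linarith
    · have hb : linf β ≤ linf ((2:ℝ) • β) / 2 := by
        refine linf_le _ fun i => ?_
        have := abs_le_linf ((2:ℝ) • β) i
        rw [habs2] at this
        linarith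
      linarith
  have hinner0 : (inner ℝ g ((0:E p) - β) : ℝ) = - inner ℝ g β := by
    rw [inner_sub_right, inner_zero_right]; ring
  have hinner2 : (inner ℝ g ((2:ℝ) • β - β) : ℝ) = inner ℝ g β := by
    rw [inner_sub_right, inner_smul_right]; ring
  rw [hlinf0, hinner0] at h0
  rw [hlinf2, hinner2] at h2
  have heq : (inner ℝ g β : ℝ) = linf β := le_antisymm (by linarith) (by linarith)
  refine ⟨?_, heq⟩
  have hlinfσ : linf sg ≤ 1 := by
    refine linf_le _ fun i => ?_
    show |σv g i| ≤ 1
    rw [abs_σv]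
  have hinnerσ : (inner ℝ g (sg - β) : ℝ) = (∑ i, |g i|) - inner ℝ g β := by
    rw [inner_sub_right, inner_eq]
    congr 1
    refine Finset.sum_congr rfl fun i _ => ?_
    show g i * σv g i = |g i|
    rw [mul_comm]; exact σv_mul g i
  rw [hinnerσ, heq] at hs
  linarith [le_trans hs hlinfσ]

lemma subdiff_struct {p : ℕ} [Nonempty (Fin p)] (β g : E p) (hM : 0 < linf β)
    (T : Finset (Fin p)) (hTmem : ∀ i, i ∈ T ↔ |β i| = linf β)
    (hg : g ∈ subdiff linf β) :
    (∀ i ∉ T, g i = 0) ∧ (∀ i ∈ T, σv β i * g i = |g i|) ∧ (∑ i ∈ T, |g i| = 1) := by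
  obtain ⟨h1, h2⟩ := subdiff_linf_sub β g hg
  set M := linf β with hMdef
  rw [inner_eq] at h2
  have hterm : ∀ i ∈ Finset.univ, g i * β i ≤ |g i| * M := by
    intro i _
    calc g i * β i ≤ |g i * β i| := le_abs_self _
    _ = |g i| * |β i| := abs_mul _ _
    _ ≤ |g i| * M := mul_le_mul_of_nonneg_left (abs_le_linf β i) (abs_nonneg _)
  have hub : ∑ i, |g i| * M ≤ M := by
    rw [← Finset.sum_mul]
    nlinarith
  have hsum_eq : ∑ i, g i * β i = ∑ i, |g i| * M := le_antisymm
    (Finset.sum_le_sum hterm) (by rw [h2] at *; linarith)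
  have hptwise : ∀ i ∈ Finset.univ, g i * β i = |g i| * M :=
    (Finset.sum_eq_sum_iff_of_le hterm).1 hsum_eq
  have habs1 : ∑ i, |g i| = 1 := by
    have : (∑ i, |g i|) * M = M := by
      rw [← Finset.sum_mul] at hsum_eq
      rw [← hsum_eq, h2]
    have := mul_right_cancel₀ (ne_of_gt hM) (by rw [this, one_mul] : (∑ i, |g i|) * M = 1 * M)
    exact this
  have hzero : ∀ i ∉ T, g i = 0 := by
    intro i hi
    have hlt : |β i| < M := lt_of_le_of_ne (abs_le_linf β i) (fun h => hi ((hTmem i).2 h))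
    by_contra hne
    have hgpos : 0 < |g i| := abs_pos.2 hne
    have := hptwise i (Finset.mem_univ i)
    have hle : g i * β i ≤ |g i| * |β i| := by
      calc g i * β i ≤ |g i * β i| := le_abs_self _
      _ = |g i| * |β i| := abs_mul _ _
    nlinarith
  have hsign : ∀ i ∈ T, σv β i * g i = |g i| := by
    intro i hiT
    have hβi : σv β i * β i = M := by rw [σv_mul, (hTmem i).1 hiT]
    have := hptwise i (Finset.mem_univ i)
    have hσ2 : σv β i ^ 2 = 1 := σv_sq β i
    have hβi2 : β i = σv β i * M := by
      calc β i = σv β i ^ 2 * β i := by rw [hσ2, one_mul]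
      _ = σv β i * (σv β i * β i) := by ring
      _ = σv β i * M := by rw [hβi]
    have hkey : σv β i * g i * M = |g i| * M := by
      calc σv β i * g i * M = g i * (σv β i * M) := by ring
      _ = g i * β i := by rw [← hβi2]
      _ = |g i| * M := this
    exact mul_right_cancel₀ (ne_of_gt hM) hkey
  refine ⟨hzero, hsign, ?_⟩
  rw [← habs1]
  exact Finset.sum_subset (Finset.subset_univ T) (fun i _ hi => by rw [hzero i hi, abs_zero])

def unifv {p : ℕ} (β : E p) (S : Finset (Fin p)) : E p :=
  WithLp.toLp 2 (fun i => if i ∈ S then σv β i / S.card else 0)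

lemma unifv_apply {p : ℕ} (β : E p) (S : Finset (Fin p)) (i : Fin p) :
    unifv β S i = if i ∈ S then σv β i / S.card else 0 := rfl

lemma unifv_abs_sum {p : ℕ} (β : E p) (S : Finset (Fin p)) (hS : S.Nonempty) :
    ∑ i, |unifv β S i| = 1 := by
  have hcard : (0:ℝ) < S.card := by exact_mod_cast Finset.card_pos.2 hS
  have : ∀ i, |unifv β S i| = if i ∈ S then (1:ℝ) / S.card else 0 := by
    intro i
    rw [unifv_apply]
    split
    · rw [abs_div, abs_σv, Nat.abs_cast]
    · exact abs_zero
  simp only [this]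
  rw [Finset.sum_ite_mem, Finset.univ_inter, Finset.sum_const, nsmul_eq_mul]
  field_simp

lemma unifv_inner {p : ℕ} (β : E p) (S T : Finset (Fin p))
    (hTmem : ∀ i, i ∈ T ↔ |β i| = linf β) (hS : S.Nonempty) (hST : S ⊆ T) :
    (inner ℝ (unifv β S) β : ℝ) = linf β := by
  have hcard : (0:ℝ) < S.card := by exact_mod_cast Finset.card_pos.2 hS
  rw [inner_eq]
  have : ∀ i, unifv β S i * β i = if i ∈ S then linf β / (S.card:ℝ) else 0 := by
    intro i
    rw [unifv_apply]
    split
    · rename_i hi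
      rw [div_mul_eq_mul_div, σv_mul, (hTmem i).1 (hST hi)]
    · exact zero_mul _
  simp only [this]
  rw [Finset.sum_ite_mem, Finset.univ_inter, Finset.sum_const, nsmul_eq_mul]
  field_simp

lemma unifv_mem_subdiff {p : ℕ} [Nonempty (Fin p)] (β : E p) (S T : Finset (Fin p))
    (hTmem : ∀ i, i ∈ T ↔ |β i| = linf β) (hS : S.Nonempty) (hST : S ⊆ T) :
    unifv β S ∈ subdiff linf β :=
  mem_subdiff_linf β _ (le_of_eq (unifv_abs_sum β S hS)) (unifv_inner β S T hTmem hS hST)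

lemma unifv_norm_le {p : ℕ} (β : E p) (S : Finset (Fin p)) (hS : S.Nonempty) :
    ‖unifv β S‖ ≤ 1 := le_trans (norm_le_l1 _) (le_of_eq (unifv_abs_sum β S hS))

-- distance from a signed vertex to a uniform point with disjoint support
lemma vertex_dist {p : ℕ} (β : E p) (S : Finset (Fin p)) (hS : S.Nonempty)
    (k : Fin p) (hk : k ∉ S) (c : ℝ) (hc : c^2 = 1) :
    ‖(c • EuclideanSpace.single k (1:ℝ) : E p) - unifv β S‖^2 = 1 + 1 / S.card := by
  have hcard : (0:ℝ) < S.card := by exact_mod_cast Finset.card_pos.2 hS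
  rw [norm_sq_eq]
  have hterm : ∀ i, ((c • EuclideanSpace.single k (1:ℝ) : E p) - unifv β S) i ^ 2
      = (if i = k then c^2 else 0) + (if i ∈ S then 1 / (S.card:ℝ)^2 else 0) := by
    intro i
    have happ : ((c • EuclideanSpace.single k (1:ℝ) : E p) - unifv β S) i
        = c * (if i = k then 1 else 0) - unifv β S i := by
      show c * EuclideanSpace.single k (1:ℝ) i - unifv β S i = _
      rw [EuclideanSpace.single_apply]
    rw [happ, unifv_apply]
    by_cases hik : i = k
    · subst hik
      rw [if_pos rfl, if_neg hk, if_pos rfl, if_neg hk]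
      ring
    · rw [if_neg hik, if_neg hik]
      split
      · rename_i hiS
        rw [mul_zero, zero_sub, neg_sq, div_pow, σv_sq]
        ring
      · ring
  simp only [hterm]
  rw [Finset.sum_add_distrib]
  rw [Finset.sum_ite_eq' Finset.univ k (fun _ => c^2)]
  rw [if_pos (Finset.mem_univ k), hc]
  rw [Finset.sum_ite_mem, Finset.univ_inter, Finset.sum_const, nsmul_eq_mul]
  field_simp

lemma lower_core {p : ℕ} [Nonempty (Fin p)] (β g : E p) (hM : 0 < linf β)
    (T : Finset (Fin p)) (hTmem : ∀ i, i ∈ T ↔ |β i| = linf β)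
    (hg : g ∈ subdiff linf β) (j₀ : Fin p) (hj₀ : j₀ ∈ T) :
    1 + 1 / max ((T.card:ℝ) - 1) (1/3)
      ≤ ‖((-(σv β j₀)) • EuclideanSpace.single j₀ (1:ℝ) : E p) - g‖^2 := by
  obtain ⟨hzero, hsign, hsum1⟩ := subdiff_struct β g hM T hTmem hg
  set zs : E p := ((-(σv β j₀)) • EuclideanSpace.single j₀ (1:ℝ) : E p) with hzs
  set a : ℝ := |g j₀| with ha
  have ha0 : 0 ≤ a := abs_nonneg _
  have ha1 : a ≤ 1 := by
    rw [← hsum1]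
    exact Finset.single_le_sum (fun i _ => abs_nonneg (g i)) hj₀
  rw [norm_sq_eq]
  have h0 : (zs - g) j₀ ^ 2 = 1 + 2*a + a^2 := by
    have : (zs - g) j₀ = -(σv β j₀) * 1 - g j₀ := by
      show (-(σv β j₀)) * EuclideanSpace.single j₀ (1:ℝ) j₀ - g j₀ = _
      rw [EuclideanSpace.single_apply, if_pos rfl]
    rw [this]
    have hs := hsign j₀ hj₀
    have hσ2 := σv_sq β j₀
    have hsq : g j₀ ^ 2 = a ^ 2 := (sq_abs _).symm
    nlinarith [hs, hσ2, hsq]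
  have hrest : ∑ i ∈ Finset.univ.erase j₀, (zs - g) i ^ 2
      = ∑ i ∈ T.erase j₀, |g i| ^ 2 := by
    have hcongr : ∀ i ∈ Finset.univ.erase j₀, (zs - g) i ^ 2 = |g i| ^ 2 := by
      intro i hi
      have hne : i ≠ j₀ := Finset.ne_of_mem_erase hi
      have : (zs - g) i = -(σv β j₀) * 0 - g i := by
        show (-(σv β j₀)) * EuclideanSpace.single j₀ (1:ℝ) i - g i = _
        rw [EuclideanSpace.single_apply, if_neg hne]
      rw [this, sq_abs]
      ring
    rw [Finset.sum_congr rfl hcongr]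
    refine (Finset.sum_subset ?_ ?_).symm
    · exact fun i hi => Finset.mem_erase.2 ⟨Finset.ne_of_mem_erase hi, Finset.mem_univ i⟩
    · intro i hi hni
      have : i ∉ T := by
        intro hiT
        exact hni (Finset.mem_erase.2 ⟨Finset.ne_of_mem_erase hi, hiT⟩)
      rw [hzero i this, abs_zero]
      ring
  have hsplit : ∑ i, (zs - g) i ^ 2
      = (1 + 2*a + a^2) + ∑ i ∈ T.erase j₀, |g i| ^ 2 := by
    rw [← Finset.add_sum_erase Finset.univ (fun i => (zs - g) i ^ 2) (Finset.mem_univ j₀),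
      h0, hrest]
  rw [hsplit]
  have hA : ∑ i ∈ T.erase j₀, |g i| = 1 - a := by
    have := Finset.add_sum_erase T (fun i => |g i|) hj₀
    rw [hsum1] at this
    linarith
  have hcauchy := sq_sum_le_card_mul_sum_sq (s := T.erase j₀) (f := fun i => |g i|)
  rw [hA, Finset.card_erase_of_mem hj₀] at hcauchy
  rcases eq_or_lt_of_le (Finset.one_le_card.2 ⟨j₀, hj₀⟩ : 1 ≤ T.card) with hcard | hcard
  · -- t = 1
    have hTcard : T.card = 1 := hcard.symm
    have hTeq : T = {j₀} := by
      obtain ⟨x, hx⟩ := Finset.card_eq_one.1 hTcard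
      rw [hx] at hj₀ ⊢
      rw [Finset.mem_singleton.1 hj₀]
    have ha_eq : a = 1 := by
      rw [hTeq, Finset.sum_singleton] at hsum1
      exact hsum1
    have hmax : max ((T.card:ℝ) - 1) (1/3) = 1/3 := by
      rw [hTcard]
      norm_num
    rw [hmax, ha_eq]
    have : (0:ℝ) ≤ ∑ i ∈ T.erase j₀, |g i| ^ 2 :=
      Finset.sum_nonneg fun i _ => sq_nonneg _
    have h4 : (1:ℝ) + 1/(1/3) = 4 := by norm_num
    linarith
  · -- t ≥ 2
    have ht2 : (2:ℕ) ≤ T.card := hcard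
    have htr : (1:ℝ) ≤ (T.card:ℝ) - 1 := by
      have : (2:ℝ) ≤ (T.card:ℝ) := by exact_mod_cast ht2
      linarith
    have hmax : max ((T.card:ℝ) - 1) (1/3) = (T.card:ℝ) - 1 :=
      max_eq_left (by linarith)
    rw [hmax]
    have hcard_cast : ((T.card - 1 : ℕ):ℝ) = (T.card:ℝ) - 1 := by
      have : (1:ℕ) ≤ T.card := le_of_lt hcard
      push_cast [this]
      ring
    rw [hcard_cast] at hcauchy
    have hpos : (0:ℝ) < (T.card:ℝ) - 1 := by linarith
    have hinv : 1/((T.card:ℝ) - 1) * ((T.card:ℝ) - 1) = 1 := by field_simp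
    set R := ∑ i ∈ T.erase j₀, |g i| ^ 2 with hR
    nlinarith [hcauchy, ha0, hpos, hinv]

lemma σv_cases {p : ℕ} (x : E p) (i : Fin p) : σv x i = 1 ∨ σv x i = -1 := by
  unfold σv; split
  · exact Or.inl rfl
  · exact Or.inr rfl

lemma z_decomp {p : ℕ} (z : E p) :
    z = ∑ k, |z k| • ((σv z k) • (EuclideanSpace.single k (1:ℝ)) : E p) := by
  ext i
  rw [WithLp.ofLp_sum, Finset.sum_apply]
  have : ∀ k, (|z k| • ((σv z k) • (EuclideanSpace.single k (1:ℝ)) : E p)) i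
      = if i = k then |z k| * σv z k else 0 := by
    intro k
    show |z k| * (σv z k * EuclideanSpace.single k (1:ℝ) i) = _
    rw [EuclideanSpace.single_apply]
    split <;> ring
  simp only [this]
  rw [Finset.sum_ite_eq Finset.univ i (fun k => |z k| * σv z k), if_pos (Finset.mem_univ i)]
  have hm := σv_mul z i
  have hσ2 := σv_sq z i
  calc z i = σv z i ^ 2 * z i := by rw [hσ2, one_mul]
  _ = σv z i * (σv z i * z i) := by ring
  _ = σv z i * |z i| := by rw [hm]
  _ = |z i| * σv z i := mul_comm _ _

lemma upper_core {p : ℕ} [Nonempty (Fin p)] (β z : E p)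
    (T : Finset (Fin p)) (hTmem : ∀ i, i ∈ T ↔ |β i| = linf β) (hTne : T.Nonempty)
    (hz : ∑ i, |z i| ≤ 1) :
    ∃ h ∈ subdiff linf β,
      ‖z - h‖ ≤ Real.sqrt (1 + 1 / max ((T.card:ℝ) - 1) (1/3)) := by
  classical
  set t := T.card with htdef
  have ht1 : 1 ≤ t := Finset.one_le_card.2 hTne
  set C : ℝ := 1 + 1 / max ((t:ℝ) - 1) (1/3) with hCdef
  have hmaxpos : 0 < max ((t:ℝ) - 1) (1/3) := lt_max_of_lt_right (by norm_num)
  have hC1 : 1 ≤ C := by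
    have : 0 < 1 / max ((t:ℝ) - 1) (1/3) := by positivity
    simp only [hCdef]; linarith
  have hC0 : 0 ≤ C := by linarith
  have hsqrt1 : 1 ≤ Real.sqrt C := (Real.le_sqrt zero_le_one hC0).2 (by rwa [one_pow])
  -- selection of the face point for each vertex
  set Sel : Fin p → Finset (Fin p) := fun k =>
    if k ∈ T then (if σv z k = σv β k then {k} else (if 2 ≤ t then T.erase k else T)) else T
    with hSel
  have hSelsub : ∀ k, Sel k ⊆ T := by
    intro k
    simp only [hSel]
    split
    · split
      · rename_i hkT _
        exact Finset.singleton_subset_iff.2 hkT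
      · split
        · exact Finset.erase_subset _ _
        · exact subset_rfl
    · exact subset_rfl
  have hSelne : ∀ k, (Sel k).Nonempty := by
    intro k
    simp only [hSel]
    split
    · split
      · exact Finset.singleton_nonempty _
      · split
        · rename_i hkT _ h2
          rw [← Finset.card_pos, Finset.card_erase_of_mem hkT]
          omega
        · exact hTne
    · exact hTne
  set s : ℝ := ∑ k, |z k| with hs
  have hs0 : 0 ≤ s := Finset.sum_nonneg fun i _ => abs_nonneg _
  have hs1 : s ≤ 1 := hz
  set u : Fin p → E p := fun k => unifv β (Sel k) with hu
  set uT : E p := unifv β T with huT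
  set h : E p := (∑ k, |z k| • u k) + (1 - s) • uT with hh
  have huk_abs : ∀ k, ∑ i, |u k i| = 1 := fun k => unifv_abs_sum β _ (hSelne k)
  have huk_inner : ∀ k, (inner ℝ (u k) β : ℝ) = linf β :=
    fun k => unifv_inner β _ T hTmem (hSelne k) (hSelsub k)
  have huT_abs : ∑ i, |uT i| = 1 := unifv_abs_sum β T hTne
  have huT_inner : (inner ℝ uT β : ℝ) = linf β := unifv_inner β T T hTmem hTne subset_rfl
  refine ⟨h, ?_, ?_⟩
  · -- h ∈ subdiff
    apply mem_subdiff_linf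
    · -- l1 norm of h ≤ 1
      have happly : ∀ i, h i = (∑ k, |z k| * u k i) + (1 - s) * uT i := by
        intro i
        show ((∑ k, |z k| • u k) : E p) i + ((1-s) • uT) i = _
        congr 1
        rw [WithLp.ofLp_sum, Finset.sum_apply]
        exact Finset.sum_congr rfl fun k _ => rfl
      calc ∑ i, |h i| ≤ ∑ i, ((∑ k, |z k| * |u k i|) + (1 - s) * |uT i|) := by
            refine Finset.sum_le_sum fun i _ => ?_
            rw [happly i]
            refine le_trans (abs_add_le _ _) (add_le_add ?_ ?_)
            · refine le_trans (Finset.abs_sum_le_sum_abs _ _) ?_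
              refine le_of_eq (Finset.sum_congr rfl fun k _ => ?_)
              rw [abs_mul, abs_abs]
            · rw [abs_mul, abs_of_nonneg (by linarith : (0:ℝ) ≤ 1 - s)]
      _ = (∑ k, |z k| * (∑ i, |u k i|)) + (1 - s) * (∑ i, |uT i|) := by
            rw [Finset.sum_add_distrib, ← Finset.mul_sum, Finset.sum_comm]
            congr 1
            refine Finset.sum_congr rfl fun k _ => ?_
            rw [Finset.mul_sum]
      _ = s + (1 - s) := by
            rw [huT_abs, mul_one]
            congr 1
            refine Finset.sum_congr rfl fun k _ => by rw [huk_abs k, mul_one]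
      _ = 1 := by ring
    · -- inner ℝ product with β
      rw [inner_add_left, sum_inner, real_inner_smul_left, huT_inner]
      have : ∀ k ∈ Finset.univ, (inner ℝ (|z k| • u k) β : ℝ) = |z k| * linf β := by
        intro k _
        rw [real_inner_smul_left, huk_inner k]
      rw [Finset.sum_congr rfl this, ← Finset.sum_mul]
      ring
  · -- distance bound
    have hvert : ∀ k, ‖((σv z k) • EuclideanSpace.single k (1:ℝ) : E p) - u k‖ ≤ Real.sqrt C := by
      intro k
      by_cases hkT : k ∈ T
      · by_cases hσeq : σv z k = σv β k
        · have heq : ((σv z k) • EuclideanSpace.single k (1:ℝ) : E p) = u k := by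
            have hSelk : Sel k = {k} := by
              simp only [hSel]; rw [if_pos hkT, if_pos hσeq]
            ext i
            show σv z k * EuclideanSpace.single k (1:ℝ) i = unifv β (Sel k) i
            rw [hSelk, unifv_apply, EuclideanSpace.single_apply]
            by_cases hik : i = k
            · subst hik
              rw [if_pos rfl, if_pos (Finset.mem_singleton_self i), Finset.card_singleton]
              rw [hσeq]
              norm_num
            · rw [if_neg hik, if_neg (by simpa using hik), mul_zero]
          rw [heq, sub_self, norm_zero]
          exact Real.sqrt_nonneg C
        · by_cases h2t : 2 ≤ t
          · have hSelk : Sel k = T.erase k := by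
              simp only [hSel]; rw [if_pos hkT, if_neg hσeq, if_pos h2t]
            have hne' : (T.erase k).Nonempty := by
              rw [← Finset.card_pos, Finset.card_erase_of_mem hkT]; omega
            have hd := vertex_dist β (T.erase k) hne' k (Finset.notMem_erase k T)
              (σv z k) (σv_sq z k)
            have hcard : ((T.erase k).card : ℝ) = (t:ℝ) - 1 := by
              rw [Finset.card_erase_of_mem hkT, Nat.cast_sub ht1, Nat.cast_one]
            rw [hcard] at hd
            have hmax : max ((t:ℝ) - 1) (1/3) = (t:ℝ) - 1 := by
              refine max_eq_left ?_
              have : (2:ℝ) ≤ (t:ℝ) := by exact_mod_cast h2t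
              linarith
            refine (Real.le_sqrt (norm_nonneg _) hC0).2 ?_
            show _ ≤ C
            rw [hCdef, hmax]
            have hueq : u k = unifv β (T.erase k) := by
              rw [hu]; simp only; rw [hSelk]
            rw [hueq, hd]
          · have ht1' : t = 1 := by omega
            have hTk : T = {k} := by
              obtain ⟨x, hx⟩ := Finset.card_eq_one.1 (htdef ▸ ht1' : T.card = 1)
              rw [hx] at hkT ⊢
              rw [Finset.mem_singleton.1 hkT]
            have hSelk : Sel k = T := by
              simp only [hSel]; rw [if_pos hkT, if_neg hσeq, if_neg h2t]
            have hdiff : ((σv z k) • EuclideanSpace.single k (1:ℝ) : E p) - u k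
                = ((σv z k - σv β k) • EuclideanSpace.single k (1:ℝ) : E p) := by
              ext i
              show σv z k * EuclideanSpace.single k (1:ℝ) i - unifv β (Sel k) i
                = (σv z k - σv β k) * EuclideanSpace.single k (1:ℝ) i
              rw [hSelk, hTk, unifv_apply, EuclideanSpace.single_apply]
              by_cases hik : i = k
              · subst hik
                rw [if_pos rfl, if_pos (Finset.mem_singleton_self i), Finset.card_singleton]
                norm_num
              · rw [if_neg hik, if_neg (by simpa using hik)]
                ring
            have habs : |σv z k - σv β k| = 2 := by
              rcases σv_cases z k with h1 | h1 <;> rcases σv_cases β k with h2 | h2 <;>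
                norm_num [h1, h2] at hσeq <;> norm_num [h1, h2]
            have hnorm : ‖((σv z k - σv β k) • EuclideanSpace.single k (1:ℝ) : E p)‖ = 2 := by
              rw [norm_smul, EuclideanSpace.norm_single, Real.norm_eq_abs, habs, norm_one]
              ring
            rw [hdiff, hnorm]
            have hmax : max ((t:ℝ) - 1) (1/3) = 1/3 := by rw [ht1']; norm_num
            have hC4 : C = 4 := by rw [hCdef, hmax]; norm_num
            rw [hC4, show (4:ℝ) = 2^2 by norm_num, Real.sqrt_sq (by norm_num : (0:ℝ) ≤ 2)]
      · have hSelk : Sel k = T := by simp only [hSel]; rw [if_neg hkT]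
        have hd := vertex_dist β T hTne k hkT (σv z k) (σv_sq z k)
        refine (Real.le_sqrt (norm_nonneg _) hC0).2 ?_
        show _ ≤ C
        have : u k = unifv β T := by rw [hu]; simp only; rw [hSelk]
        rw [this]
        rw [hd]
        rw [hCdef]
        have hmaxle : max ((t:ℝ) - 1) (1/3) ≤ (t:ℝ) := by
          refine max_le (by linarith) ?_
          have : (1:ℝ) ≤ (t:ℝ) := by exact_mod_cast ht1
          linarith
        have htpos : (0:ℝ) < (t:ℝ) := by
          have : (1:ℝ) ≤ (t:ℝ) := by exact_mod_cast ht1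
          linarith
        have := one_div_le_one_div_of_le hmaxpos hmaxle
        linarith
    have hzh : z - h = (∑ k, |z k| • (((σv z k) • EuclideanSpace.single k (1:ℝ) : E p) - u k))
        - (1 - s) • uT := by
      conv_lhs => rw [z_decomp z]
      rw [hh]
      simp only [smul_sub, Finset.sum_sub_distrib]
      abel
    calc ‖z - h‖ = ‖(∑ k, |z k| • (((σv z k) • EuclideanSpace.single k (1:ℝ) : E p) - u k))
          - (1 - s) • uT‖ := by rw [hzh]
    _ ≤ ‖∑ k, |z k| • (((σv z k) • EuclideanSpace.single k (1:ℝ) : E p) - u k)‖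
          + ‖(1 - s) • uT‖ := norm_sub_le _ _
    _ ≤ (∑ k, |z k| * Real.sqrt C) + (1 - s) * 1 := by
          refine add_le_add ?_ ?_
          · refine le_trans (norm_sum_le _ _) (Finset.sum_le_sum fun k _ => ?_)
            rw [norm_smul, Real.norm_eq_abs, abs_abs]
            exact mul_le_mul_of_nonneg_left (hvert k) (abs_nonneg _)
          · rw [norm_smul, Real.norm_eq_abs, abs_of_nonneg (by linarith : (0:ℝ) ≤ 1 - s)]
            exact mul_le_mul_of_nonneg_left (unifv_norm_le β T hTne) (by linarith)
    _ = s * Real.sqrt C + (1 - s) := by rw [← Finset.sum_mul]; ring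
    _ ≤ Real.sqrt C := by nlinarith [hsqrt1, hs0, hs1]

/-- the relative diameter of `β ≠ 0` with respect to the ℓ∞ norm
satisfies `φ(β;‖·‖_∞)² = 1 + 1/max{t − 1, 1/3}`, where `t` is the number of
coordinates attaining the maximal absolute value. -/
theorem relDiam_linf (p : ℕ) (β : E p) (hβ : β ≠ 0)
    (t : ℕ) (ht : t = (Finset.univ.filter fun i => |β i| = linf β).card)
    (ht1 : 1 ≤ t) :
    relDiam (linf (p := p)) β ^ 2 = 1 + 1 / max ((t : ℝ) - 1) (1 / 3) := by
  classical
  have hp : 0 < p := by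
    rcases Nat.eq_zero_or_pos p with h0 | h
    · subst h0
      exact absurd (Subsingleton.elim β 0) hβ
    · exact h
  haveI : Nonempty (Fin p) := ⟨⟨0, hp⟩⟩
  set T : Finset (Fin p) := Finset.univ.filter fun i => |β i| = linf β with hTdef
  have hTmem : ∀ i, i ∈ T ↔ |β i| = linf β := by
    intro i; simp [hTdef]
  have htT : t = T.card := ht
  have hTne : T.Nonempty := by
    rw [← Finset.card_pos, ← htT]; omega
  have hM : 0 < linf β := by
    have hex : ∃ j, β j ≠ 0 := by
      by_contra hcon
      push_neg at hcon
      exact hβ (PiLp.ext hcon)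
    obtain ⟨j, hj⟩ := hex
    exact lt_of_lt_of_le (abs_pos.2 hj) (abs_le_linf β j)
  set C : ℝ := 1 + 1 / max ((t:ℝ) - 1) (1/3) with hCdef
  have hmaxpos : 0 < max ((t:ℝ) - 1) (1/3) := lt_max_of_lt_right (by norm_num)
  have hC0 : (0:ℝ) ≤ C := by
    have : 0 < 1 / max ((t:ℝ) - 1) (1/3) := by positivity
    rw [hCdef]; linarith
  have hcast : ((T.card : ℝ)) = (t : ℝ) := by exact_mod_cast htT.symm
  -- the two sets
  have hFB : subdiff linf β ⊆ dualBall (linf (p := p)) := by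
    intro g hg
    exact (mem_dualBall_linf g).2 (subdiff_linf_sub β g hg).1
  have hFne : unifv β T ∈ subdiff linf β :=
    unifv_mem_subdiff β T T hTmem hTne subset_rfl
  have hBne : (0 : E p) ∈ dualBall (linf (p := p)) := by
    rw [mem_dualBall_linf]
    simp [show ∀ i, (0:E p) i = 0 from fun _ => rfl]
  have hBsub : dualBall (linf (p := p)) ⊆ Metric.closedBall 0 1 := by
    intro z hz
    rw [Metric.mem_closedBall, dist_zero_right]
    exact le_trans (norm_le_l1 z) ((mem_dualBall_linf z).1 hz)
  have hBbdd : Bornology.IsBounded (dualBall (linf (p := p))) :=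
    (Metric.isBounded_closedBall).subset hBsub
  have hFbdd : Bornology.IsBounded (subdiff (linf (p := p)) β) := hBbdd.subset hFB
  have hedist : EMetric.hausdorffEdist (dualBall (linf (p := p))) (subdiff linf β) ≠ ⊤ :=
    Metric.hausdorffEdist_ne_top_of_nonempty_of_bounded ⟨0, hBne⟩ ⟨_, hFne⟩ hBbdd hFbdd
  -- upper bound
  have hupper : Metric.hausdorffDist (dualBall (linf (p := p))) (subdiff linf β)
      ≤ Real.sqrt C := by
    refine Metric.hausdorffDist_le_of_infDist (Real.sqrt_nonneg C) ?_ ?_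
    · intro z hz
      obtain ⟨h, hhm, hhd⟩ := upper_core β z T hTmem hTne ((mem_dualBall_linf z).1 hz)
      refine le_trans (Metric.infDist_le_dist_of_mem hhm) ?_
      rw [dist_eq_norm]
      rw [hcast] at hhd
      exact hhd
    · intro g hg
      rw [Metric.infDist_zero_of_mem (hFB hg)]
      exact Real.sqrt_nonneg C
  -- lower bound
  obtain ⟨j₀, hj₀⟩ := hTne
  set zs : E p := ((-(σv β j₀)) • EuclideanSpace.single j₀ (1:ℝ) : E p) with hzs
  have hzsB : zs ∈ dualBall (linf (p := p)) := by
    rw [mem_dualBall_linf]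
    have : ∀ i, |zs i| = if i = j₀ then 1 else 0 := by
      intro i
      show |(-(σv β j₀)) * EuclideanSpace.single j₀ (1:ℝ) i| = _
      rw [EuclideanSpace.single_apply]
      split
      · rw [mul_one, abs_neg, abs_σv]
      · rw [mul_zero, abs_zero]
    simp only [this]
    rw [Finset.sum_ite_eq' Finset.univ j₀ (fun _ => (1:ℝ)), if_pos (Finset.mem_univ j₀)]
  have hlower : Real.sqrt C
      ≤ Metric.hausdorffDist (dualBall (linf (p := p))) (subdiff linf β) := by
    refine le_trans ?_ (Metric.infDist_le_hausdorffDist_of_mem hzsB hedist)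
    rw [Metric.infDist_eq_iInf]
    haveI : Nonempty (subdiff (linf (p := p)) β) := ⟨⟨_, hFne⟩⟩
    refine le_ciInf fun g => ?_
    rw [dist_eq_norm]
    have hlc := lower_core β g hM T hTmem g.2 j₀ hj₀
    rw [hcast] at hlc
    calc Real.sqrt C ≤ Real.sqrt (‖zs - (g:E p)‖^2) := Real.sqrt_le_sqrt hlc
    _ = ‖zs - (g:E p)‖ := Real.sqrt_sq (norm_nonneg _)
  have heq : relDiam (linf (p := p)) β = Real.sqrt C := le_antisymm hupper hlower
  rw [heq, Real.sq_sqrt hC0]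

end
end

section
/- Let w ∈ ℝ^p with wᵢ > 0 for every i, and let f(β) = Σᵢ wᵢ·|βᵢ| be the associated weighted ℓ₁ norm. Then for every β ∈ ℝ^p with β ≠ 0, the relative diameter satisfies φ(β;f)² = 4·Σ_{i : βᵢ ≠ 0} wᵢ². -/
open Metric Set

noncomputable section

/-! ### Auxiliary lemmas -/

private lemma pinner_eq {p : ℕ} (z b : E p) : (inner ℝ z b : ℝ) = ∑ i, z i * b i := by
  rw [PiLp.inner_apply]; simp [RCLike.inner_apply, mul_comm]

private lemma pdist_eq {p : ℕ} (x y : E p) :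
    dist x y = Real.sqrt (∑ i, (x i - y i) ^ 2) := by
  rw [EuclideanSpace.dist_eq]
  congr 1
  exact Finset.sum_congr rfl fun i _ => by rw [Real.dist_eq, sq_abs]

private lemma abs_sign_le (x : ℝ) : |Real.sign x| ≤ 1 := by
  rcases lt_trichotomy x 0 with h | h | h
  · rw [Real.sign_of_neg h]; norm_num
  · rw [h, Real.sign_zero]; norm_num
  · rw [Real.sign_of_pos h]; norm_num

private lemma abs_sign_of_ne {x : ℝ} (hx : x ≠ 0) : |Real.sign x| = 1 := by
  rcases lt_trichotomy x 0 with h | h | h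
  · rw [Real.sign_of_neg h]; norm_num
  · exact absurd h hx
  · rw [Real.sign_of_pos h]; norm_num

private lemma sign_sq_of_ne {x : ℝ} (hx : x ≠ 0) : Real.sign x ^ 2 = 1 := by
  rw [← sq_abs, abs_sign_of_ne hx]; norm_num
private lemma mem_dualBall_iff_s19 {p : ℕ} (w : Fin p → ℝ) (hw : ∀ i, 0 < w i) (z : E p) :
    z ∈ dualBall (fun x : E p => ∑ i, w i * |x i|) ↔ ∀ i, |z i| ≤ w i := by
  have hbdd : BddAbove ((fun β => (inner ℝ z β : ℝ)) ''
      {β : E p | ∑ i, w i * |β i| ≤ 1}) := by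
    refine ⟨∑ i, |z i| / w i, ?_⟩
    rintro _ ⟨b, hb, rfl⟩
    show (inner ℝ z b : ℝ) ≤ _
    rw [pinner_eq]
    refine Finset.sum_le_sum fun i _ => ?_
    have hbi : |b i| ≤ 1 / w i := by
      rw [le_div_iff₀ (hw i), mul_comm]
      calc w i * |b i| ≤ ∑ j, w j * |b j| :=
            Finset.single_le_sum (fun j _ => mul_nonneg (hw j).le (abs_nonneg _))
              (Finset.mem_univ i)
        _ ≤ 1 := hb
    calc z i * b i ≤ |z i * b i| := le_abs_self _
    _ = |z i| * |b i| := abs_mul _ _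
    _ ≤ |z i| * (1 / w i) := by
        exact mul_le_mul_of_nonneg_left hbi (abs_nonneg _)
    _ = |z i| / w i := by ring
  constructor
  · intro hz i
    by_contra hlt
    push_neg at hlt
    have hzne : z i ≠ 0 := by
      intro h; rw [h] at hlt; simp at hlt; exact absurd hlt (not_lt.2 (hw i).le)
    set b : E p := WithLp.toLp 2 (fun j => if j = i then Real.sign (z i) / w i else 0) with hbdef
    have hsign : |Real.sign (z i)| = 1 := by
      rcases lt_trichotomy (z i) 0 with h | h | h
      · rw [Real.sign_of_neg h]; norm_num
      · exact absurd h hzne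
      · rw [Real.sign_of_pos h]; norm_num
    have hNb : ∑ j, w j * |b j| ≤ 1 := by
      rw [Finset.sum_eq_single i]
      · simp only [hbdef, PiLp.toLp_apply, if_pos rfl, if_true, abs_div, hsign, abs_of_pos (hw i)]
        rw [mul_div_cancel₀]; exact (hw i).ne'
      · intro j _ hj; simp [hbdef, hj]
      · intro h; exact absurd (Finset.mem_univ i) h
    have hval : (inner ℝ z b : ℝ) = |z i| / w i := by
      rw [pinner_eq, Finset.sum_eq_single i]
      · simp only [hbdef, PiLp.toLp_apply, if_pos rfl, if_true]
        have hms : z i * Real.sign (z i) = |z i| := by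
          rcases lt_trichotomy (z i) 0 with h | h | h
          · rw [Real.sign_of_neg h, abs_of_neg h]; ring
          · exact absurd h hzne
          · rw [Real.sign_of_pos h, abs_of_pos h]; ring
        rw [← mul_div_assoc, hms]
      · intro j _ hj; simp [hbdef, hj]
      · intro h; exact absurd (Finset.mem_univ i) h
    have hle : |z i| / w i ≤ 1 := by
      calc |z i| / w i = (inner ℝ z b : ℝ) := hval.symm
      _ ≤ dualOf (fun x : E p => ∑ i, w i * |x i|) z :=
          le_csSup hbdd ⟨b, hNb, rfl⟩
      _ ≤ 1 := hz
    rw [div_le_one (hw i)] at hle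
    exact absurd hle (not_le.2 hlt)
  · intro hz
    simp only [dualBall, dualOf, Set.mem_setOf_eq]
    have h0 : (0 : E p) ∈ {β : E p | ∑ i, w i * |β i| ≤ 1} := by
      simp
    refine csSup_le ⟨_, Set.mem_image_of_mem _ h0⟩ ?_
    rintro _ ⟨b, hb, rfl⟩
    show (inner ℝ z b : ℝ) ≤ 1
    rw [pinner_eq]
    have step : ∀ i ∈ Finset.univ, z i * b i ≤ w i * |b i| := by
      intro i _
      calc z i * b i ≤ |z i * b i| := le_abs_self _
        _ = |z i| * |b i| := abs_mul _ _
        _ ≤ w i * |b i| := mul_le_mul_of_nonneg_right (hz i) (abs_nonneg _)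
    exact le_trans (Finset.sum_le_sum step) hb

private lemma mem_subdiff_iff {p : ℕ} (w : Fin p → ℝ) (hw : ∀ i, 0 < w i) (β g : E p) :
    g ∈ subdiff (fun x : E p => ∑ i, w i * |x i|) β ↔
      ((∀ i, β i ≠ 0 → g i = w i * Real.sign (β i)) ∧ ∀ i, |g i| ≤ w i) := by
  have subval : ∀ y : E p, ((y - β : E p) : Fin p → ℝ) = fun i => y i - β i := by
    intro y; funext i; simp
  constructor
  · intro hg
    -- first establish the bound |g i| ≤ w i
    have hbound : ∀ i, |g i| ≤ w i := by
      intro i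
      have key : ∀ t : ℝ, g i * t ≤ w i * |t| := by
        intro t
        set y : E p := WithLp.toLp 2 (fun j => if j = i then β i + t else β j) with hy
        have h : ∑ j, w j * |y j| ≥ (∑ j, w j * |β j|) + (inner ℝ g (y - β) : ℝ) := hg y
        rw [pinner_eq] at h
        have hsum : ∑ j, g j * ((y - β : E p) j) = g i * t := by
          rw [Finset.sum_eq_single i]
          · simp [subval, hy]
          · intro j _ hj; simp [subval, hy, hj]
          · intro h; exact absurd (Finset.mem_univ i) h
        have hNy : ∑ j, w j * |y j| ≤ (∑ j, w j * |β j|) + w i * |t| := by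
          have : ∀ j ∈ Finset.univ, w j * |y j| ≤
              w j * |β j| + (if j = i then w i * |t| else 0) := by
            intro j _
            by_cases hj : j = i
            · subst hj
              simp only [hy, PiLp.toLp_apply, if_pos rfl, if_true]
              have : |β j + t| ≤ |β j| + |t| := abs_add_le _ _
              nlinarith [hw j, abs_nonneg (β j + t)]
            · simp [hy, hj]
          calc ∑ j, w j * |y j| ≤
              ∑ j, (w j * |β j| + (if j = i then w i * |t| else 0)) :=
                Finset.sum_le_sum this
            _ = (∑ j, w j * |β j|) + w i * |t| := by
                rw [Finset.sum_add_distrib, Finset.sum_ite_eq' Finset.univ i]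
                simp
        rw [hsum] at h
        linarith
      rcases le_or_gt (g i) 0 with h | h
      · have := key (-1); rw [abs_neg, abs_one, mul_neg_one, mul_one] at this
        rw [abs_of_nonpos h]; linarith
      · have := key 1; rw [abs_one, mul_one, mul_one] at this
        rw [abs_of_pos h]; linarith
    refine ⟨?_, hbound⟩
    intro i hi
    -- plug in y with y i = 0
    set y : E p := WithLp.toLp 2 (fun j => if j = i then 0 else β j) with hy
    have h : ∑ j, w j * |y j| ≥ (∑ j, w j * |β j|) + (inner ℝ g (y - β) : ℝ) := hg y
    rw [pinner_eq] at h
    have hsum : ∑ j, g j * ((y - β : E p) j) = -(g i * β i) := by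
      rw [Finset.sum_eq_single i]
      · simp [subval, hy]
      · intro j _ hj; simp [subval, hy, hj]
      · intro h; exact absurd (Finset.mem_univ i) h
    have hNy : ∑ j, w j * |y j| = (∑ j, w j * |β j|) - w i * |β i| := by
      have : ∀ j ∈ Finset.univ, w j * |y j| =
          w j * |β j| - (if j = i then w i * |β i| else 0) := by
        intro j _
        by_cases hj : j = i
        · subst hj; simp [hy]
        · simp [hy, hj]
      rw [Finset.sum_congr rfl this, Finset.sum_sub_distrib,
        Finset.sum_ite_eq' Finset.univ i]
      simp
    rw [hsum, hNy] at h
    have hge : g i * β i ≥ w i * |β i| := by linarith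
    have hle : g i * β i ≤ w i * |β i| := by
      calc g i * β i ≤ |g i * β i| := le_abs_self _
        _ = |g i| * |β i| := abs_mul _ _
        _ ≤ w i * |β i| := mul_le_mul_of_nonneg_right (hbound i) (abs_nonneg _)
    have heq : g i * β i = w i * |β i| := le_antisymm hle hge
    rcases lt_trichotomy (β i) 0 with h' | h' | h'
    · rw [Real.sign_of_neg h']
      rw [abs_of_neg h'] at heq
      have : g i * β i = (w i * (-1)) * β i := by rw [heq]; ring
      exact mul_right_cancel₀ hi this
    · exact absurd h' hi
    · rw [Real.sign_of_pos h']
      rw [abs_of_pos h'] at heq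
      have : g i * β i = (w i * 1) * β i := by rw [heq]; ring
      exact mul_right_cancel₀ hi this
  · rintro ⟨hsupp, hbound⟩ y
    show (∑ j, w j * |β j|) + (inner ℝ g (y - β) : ℝ) ≤ ∑ j, w j * |y j|
    rw [pinner_eq]
    have hsplit : ∑ j, g j * ((y - β : E p) j) =
        (∑ j, g j * y j) - ∑ j, g j * β j := by
      rw [← Finset.sum_sub_distrib]
      refine Finset.sum_congr rfl fun j _ => ?_
      rw [subval]; ring
    have hgb : ∑ j, g j * β j = ∑ j, w j * |β j| := by
      refine Finset.sum_congr rfl fun j _ => ?_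
      by_cases hj : β j = 0
      · simp [hj]
      · rw [hsupp j hj]
        rcases lt_trichotomy (β j) 0 with h' | h' | h'
        · rw [Real.sign_of_neg h', abs_of_neg h']; ring
        · exact absurd h' hj
        · rw [Real.sign_of_pos h', abs_of_pos h']; ring
    have hgy : ∑ j, g j * y j ≤ ∑ j, w j * |y j| := by
      refine Finset.sum_le_sum fun j _ => ?_
      calc g j * y j ≤ |g j * y j| := le_abs_self _
        _ = |g j| * |y j| := abs_mul _ _
        _ ≤ w j * |y j| := mul_le_mul_of_nonneg_right (hbound j) (abs_nonneg _)
    rw [hsplit, hgb]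
    linarith
/-- for the weighted ℓ₁ norm `f(β) = Σᵢ wᵢ|βᵢ|` with positive weights,
the relative diameter of any `β ≠ 0` satisfies `φ(β;f)² = 4·Σ_{i : βᵢ ≠ 0} wᵢ²`. -/
theorem relDiam_weighted_l1 (p : ℕ) (w : Fin p → ℝ) (hw : ∀ i, 0 < w i)
    (β : E p) (hβ : β ≠ 0) :
    relDiam (fun x : E p => ∑ i, w i * |x i|) β ^ 2 =
      4 * ∑ i ∈ Finset.univ.filter (fun i => β i ≠ 0), w i ^ 2 := by
  classical
  set N : E p → ℝ := fun x => ∑ i, w i * |x i| with hN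
  set S : Finset (Fin p) := Finset.univ.filter (fun i => β i ≠ 0) with hS
  set T : ℝ := ∑ i ∈ S, w i ^ 2 with hT
  have hT0 : 0 ≤ T := Finset.sum_nonneg fun i _ => sq_nonneg _
  set D : ℝ := 2 * Real.sqrt T with hD
  have hD0 : 0 ≤ D := by positivity
  have sqrt4 : Real.sqrt (4 * T) = D := by
    rw [hD, show (4 : ℝ) = 2 ^ 2 by norm_num, Real.sqrt_mul (by positivity) T,
      Real.sqrt_sq (by norm_num : (0:ℝ) ≤ 2)]
  have habs : ∀ i, |w i * Real.sign (β i)| ≤ w i := by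
    intro i
    calc |w i * Real.sign (β i)| = |w i| * |Real.sign (β i)| := abs_mul _ _
      _ ≤ |w i| * 1 := mul_le_mul_of_nonneg_left (abs_sign_le _) (abs_nonneg _)
      _ = w i := by rw [mul_one, abs_of_pos (hw i)]
  -- the canonical subgradient
  set g₀ : E p := WithLp.toLp 2 (fun i => w i * Real.sign (β i) : Fin p → ℝ) with hg₀
  have hg₀mem : g₀ ∈ subdiff N β := by
    rw [hN, mem_subdiff_iff w hw]
    exact ⟨fun i _ => rfl, habs⟩
  have h0mem : (0 : E p) ∈ dualBall N := by
    rw [hN, mem_dualBall_iff_s19 w hw]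
    intro i
    simpa using (hw i).le
  have hsub : subdiff N β ⊆ dualBall N := by
    intro g hg
    rw [hN, mem_dualBall_iff_s19 w hw]
    exact ((mem_subdiff_iff w hw β g).1 hg).2
  -- boundedness
  have hball : dualBall N ⊆ Metric.closedBall 0 (Real.sqrt (∑ i, w i ^ 2)) := by
    intro z hz
    rw [hN, mem_dualBall_iff_s19 w hw] at hz
    rw [Metric.mem_closedBall, pdist_eq]
    apply Real.sqrt_le_sqrt
    refine Finset.sum_le_sum fun i _ => ?_
    have : |z i - (0 : E p) i| ≤ w i := by simpa using hz i
    calc (z i - (0 : E p) i) ^ 2 = |z i - (0 : E p) i| ^ 2 := (sq_abs _).symm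
      _ ≤ w i ^ 2 := pow_le_pow_left₀ (abs_nonneg _) this 2
  have hbd1 : Bornology.IsBounded (dualBall N) :=
    Metric.isBounded_closedBall.subset hball
  have hbd2 : Bornology.IsBounded (subdiff N β) := hbd1.subset hsub
  have ne_top : EMetric.hausdorffEdist (dualBall N) (subdiff N β) ≠ ⊤ :=
    Metric.hausdorffEdist_ne_top_of_nonempty_of_bounded ⟨0, h0mem⟩ ⟨g₀, hg₀mem⟩ hbd1 hbd2
  -- upper bound
  have hup : Metric.hausdorffDist (dualBall N) (subdiff N β) ≤ D := by
    apply Metric.hausdorffDist_le_of_mem_dist hD0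
    · intro z hz
      rw [hN, mem_dualBall_iff_s19 w hw] at hz
      refine ⟨WithLp.toLp 2 (fun i => if β i ≠ 0 then w i * Real.sign (β i) else z i : Fin p → ℝ),
        ?_, ?_⟩
      · rw [hN, mem_subdiff_iff w hw]
        constructor
        · intro i hi; simp [hi]
        · intro i
          by_cases hi : β i ≠ 0
          · simpa [hi] using habs i
          · simpa [hi] using hz i
      · rw [pdist_eq]
        have hterm : ∀ i ∈ Finset.univ,
            (z i - (if β i ≠ 0 then w i * Real.sign (β i) else z i)) ^ 2 ≤
              (if β i ≠ 0 then 4 * w i ^ 2 else 0) := by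
          intro i _
          by_cases hi : β i ≠ 0
          · simp only [if_pos hi]
            have h1 : |z i - w i * Real.sign (β i)| ≤ 2 * w i := by
              have h2 : |z i - w i * Real.sign (β i)| ≤
                  |z i| + |w i * Real.sign (β i)| := by
                rw [sub_eq_add_neg, ← abs_neg (w i * Real.sign (β i))]
                exact abs_add_le _ _
              have := habs i
              have := hz i
              linarith
            calc (z i - w i * Real.sign (β i)) ^ 2
                = |z i - w i * Real.sign (β i)| ^ 2 := (sq_abs _).symm
              _ ≤ (2 * w i) ^ 2 := pow_le_pow_left₀ (abs_nonneg _) h1 2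
              _ = 4 * w i ^ 2 := by ring
          · simp [hi]
        calc Real.sqrt (∑ i, (z i - (if β i ≠ 0 then w i * Real.sign (β i) else z i)) ^ 2)
            ≤ Real.sqrt (∑ i, if β i ≠ 0 then 4 * w i ^ 2 else 0) :=
              Real.sqrt_le_sqrt (Finset.sum_le_sum hterm)
          _ = Real.sqrt (4 * T) := by
              congr 1
              rw [hT, hS, Finset.mul_sum, Finset.sum_filter]
          _ = D := sqrt4
    · intro g hg
      exact ⟨g, hsub hg, by simp [hD0]⟩
  -- lower bound
  have hlow : D ≤ Metric.hausdorffDist (dualBall N) (subdiff N β) := by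
    set zs : E p := WithLp.toLp 2 (fun i => -(w i * Real.sign (β i)) : Fin p → ℝ) with hzs
    have hzsmem : zs ∈ dualBall N := by
      rw [hN, mem_dualBall_iff_s19 w hw]
      intro i
      rw [hzs]
      simpa using habs i
    have h1 : D ≤ Metric.infDist zs (subdiff N β) := by
      rw [Metric.infDist_eq_iInf]
      have : Nonempty (subdiff N β) := ⟨⟨g₀, hg₀mem⟩⟩
      refine le_ciInf fun g => ?_
      obtain ⟨hgs, hgb⟩ := (mem_subdiff_iff w hw β (g : E p)).1 g.2
      rw [pdist_eq]
      have hsum_ge : 4 * T ≤ ∑ i, (zs i - (g : E p) i) ^ 2 := by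
        have heq : ∑ i ∈ S, (zs i - (g : E p) i) ^ 2 = 4 * T := by
          rw [hT, Finset.mul_sum]
          refine Finset.sum_congr rfl fun i hi => ?_
          have hne : β i ≠ 0 := by
            rw [hS, Finset.mem_filter] at hi; exact hi.2
          rw [hgs i hne, hzs, PiLp.toLp_apply]
          have hsq : Real.sign (β i) ^ 2 = 1 := sign_sq_of_ne hne
          have : (-(w i * Real.sign (β i)) - w i * Real.sign (β i)) ^ 2 =
              4 * w i ^ 2 * Real.sign (β i) ^ 2 := by ring
          rw [this, hsq, mul_one]
        rw [← heq]
        exact Finset.sum_le_sum_of_subset_of_nonneg (Finset.subset_univ S)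
          (fun i _ _ => sq_nonneg _)
      calc D = Real.sqrt (4 * T) := sqrt4.symm
        _ ≤ Real.sqrt (∑ i, (zs i - (g : E p) i) ^ 2) := Real.sqrt_le_sqrt hsum_ge
    exact h1.trans (Metric.infDist_le_hausdorffDist_of_mem hzsmem ne_top)
  have hrd : relDiam N β = D := le_antisymm hup hlow
  rw [hrd, hD, mul_pow, Real.sq_sqrt hT0, hT, hS]
  norm_num

end
end
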